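/- Let D be the digraph on vertex set {u,v,w,z,x} ∪ A ∪ B ∪ C (disjoint, possibly empty sets) whose arcs are exactly those of the 4-cycles (u,v,w,z,u) and (u,v,w,x,u), together with u→a→v for all a∈A, v→b→w for all b∈B, and w→c→u for all c∈C. Then D is strongly connected of girth 4 and D is not λ'-connected. -/

import Mathlib

/-- A digraph on vertex type `V`, given by its adjacency (arc) relation. -/
structure Digr (V : Type) where
  Adj : V → V → Prop

namespace Digr

variable {V : Type}

/-- Reachability by directed paths. -/
def Reach (D : Digr V) : V → V → Prop := Relation.ReflTransGen D.Adj

/-- A digraph is strongly connected if every vertex reaches every other. -/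
def StronglyConnected (D : Digr V) : Prop := ∀ u v : V, D.Reach u v

/-- An oriented graph: no loops and no pair of opposite arcs. -/
def Oriented (D : Digr V) : Prop := ∀ u v : V, D.Adj u v → ¬ D.Adj v u

/-- The digraph contains at least one arc. -/
def HasArc (D : Digr V) : Prop := ∃ u v : V, D.Adj u v

/-- Delete a set of arcs. -/
def delArcs (D : Digr V) (S : Set (V × V)) : Digr V :=
  ⟨fun a b => D.Adj a b ∧ (a, b) ∉ S⟩

/-- Delete a set of vertices (keep arcs avoiding them). -/
def delVerts (D : Digr V) (X : Set V) : Digr V :=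
  ⟨fun a b => D.Adj a b ∧ a ∉ X ∧ b ∉ X⟩

/-- Induced subdigraph on a vertex set. -/
def induce (D : Digr V) (X : Set V) : Digr V :=
  ⟨fun a b => a ∈ X ∧ b ∈ X ∧ D.Adj a b⟩

/-- The induced subdigraph on `X` is strongly connected. -/
def StronglyConnectedOn (D : Digr V) (X : Set V) : Prop :=
  ∀ u ∈ X, ∀ v ∈ X, (D.induce X).Reach u v

/-- Mutual reachability. -/
def MReach (D : Digr V) (u v : V) : Prop := D.Reach u v ∧ D.Reach v u

/-- `X` is a strong component: an equivalence class of mutual reachability. -/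
def IsStrongComponent (D : Digr V) (X : Set V) : Prop :=
  ∃ x : V, X = {y | D.MReach x y}

/-- `S` is a restricted arc-cut: a set of arcs whose deletion leaves a
non-trivial strong component `X` (containing an arc) such that deleting the
vertices of `X` from `D` leaves an arc. -/
def IsRestrictedArcCut (D : Digr V) (S : Set (V × V)) : Prop :=
  (∀ p ∈ S, D.Adj p.1 p.2) ∧
  ∃ X : Set V, (D.delArcs S).IsStrongComponent X ∧
    (∃ u ∈ X, ∃ v ∈ X, (D.delArcs S).Adj u v) ∧
    (D.delVerts X).HasArc

/-- A digraph is λ'-connected if it admits a restricted arc-cut. -/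
def LambdaPrimeConnected (D : Digr V) : Prop :=
  ∃ S : Set (V × V), D.IsRestrictedArcCut S

/-- λ'(D): minimum size of a restricted arc-cut. -/
noncomputable def lambdaPrime (D : Digr V) [Fintype V] : ℕ :=
  sInf {n : ℕ | ∃ S : Finset (V × V), D.IsRestrictedArcCut ↑S ∧ S.card = n}

/-- λ(D): the arc-connectivity, the minimum size of an arc set whose removal
destroys strong connectivity. -/
noncomputable def lambda (D : Digr V) [Fintype V] : ℕ :=
  sInf {n : ℕ | ∃ S : Finset (V × V), (∀ p ∈ S, D.Adj p.1 p.2) ∧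
    ¬ (D.delArcs ↑S).StronglyConnected ∧ S.card = n}

/-- The list `l` of distinct vertices forms a directed cycle. -/
def IsCycleList (D : Digr V) (l : List V) : Prop :=
  ∃ h : l ≠ [], l.Nodup ∧ l.Chain' D.Adj ∧ D.Adj (l.getLast h) (l.head h)

/-- The girth: minimum length of a directed cycle. -/
noncomputable def girth (D : Digr V) : ℕ :=
  sInf {n : ℕ | ∃ l : List V, D.IsCycleList l ∧ l.length = n}

/-- `(u,v,w,z,u)` is a 4-cycle of `D`. -/
def Cycle4 (D : Digr V) (u v w z : V) : Prop := D.IsCycleList [u, v, w, z]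

/-- Out-degree. -/
def outDeg (D : Digr V) [Fintype V] [DecidableRel D.Adj] (v : V) : ℕ :=
  (Finset.univ.filter fun w => D.Adj v w).card

/-- In-degree. -/
def inDeg (D : Digr V) [Fintype V] [DecidableRel D.Adj] (v : V) : ℕ :=
  (Finset.univ.filter fun w => D.Adj w v).card

/-- ξ(D): minimum over girth cycles `C` of
`min (Σ d⁺ − g, Σ d⁻ − g)`. -/
noncomputable def xi (D : Digr V) [Fintype V] [DecidableRel D.Adj] : ℤ :=
  sInf {k : ℤ | ∃ l : List V, D.IsCycleList l ∧ l.length = D.girth ∧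
    k = min (((l.map D.outDeg).sum : ℤ) - (D.girth : ℤ))
            (((l.map D.inDeg).sum : ℤ) - (D.girth : ℤ))}

/-- ∂⁺(X): the set of arcs from `X` to its complement. -/
noncomputable def outBoundary (D : Digr V) [Fintype V] (X : Set V) : Finset (V × V) :=
  (Set.toFinite {p : V × V | p.1 ∈ X ∧ p.2 ∉ X ∧ D.Adj p.1 p.2}).toFinset

/-- ∂⁻(X): the set of arcs from the complement of `X` into `X`. -/
noncomputable def inBoundary (D : Digr V) [Fintype V] (X : Set V) : Finset (V × V) :=
  (Set.toFinite {p : V × V | p.1 ∉ X ∧ p.2 ∈ X ∧ D.Adj p.1 p.2}).toFinset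

/-- The list of arcs of a cycle given as a vertex list. -/
def cycleArcs (l : List V) : List (V × V) := l.zip (l.rotate 1)

end Digr

section Aux

open Classical in
/-- Rank function used for the pass-through arguments. -/
noncomputable def rk {V : Type} (a b c : V) (P Q : Set V) (t : V) : ℕ :=
  if t = a then 0 else if t = b then 2 else if t = c then 4
  else if t ∈ P then 1 else if t ∈ Q then 3 else 5

variable {V : Type} {a b c t : V} {P Q : Set V}

lemma rk_a : rk a b c P Q a = 0 := by simp [rk]

lemma rk_b (h : b ≠ a) : rk a b c P Q b = 2 := by simp [rk, h]

lemma rk_c (h1 : c ≠ a) (h2 : c ≠ b) : rk a b c P Q c = 4 := by simp [rk, h1, h2]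

lemma rk_P (ht : t ∈ P) (h1 : t ≠ a) (h2 : t ≠ b) (h3 : t ≠ c) :
    rk a b c P Q t = 1 := by simp [rk, ht, h1, h2, h3]

lemma rk_Q (ht : t ∈ Q) (hP : t ∉ P) (h1 : t ≠ a) (h2 : t ≠ b) (h3 : t ≠ c) :
    rk a b c P Q t = 3 := by simp [rk, ht, hP, h1, h2, h3]

lemma rk_top (hP : t ∉ P) (hQ : t ∉ Q) (h1 : t ≠ a) (h2 : t ≠ b) (h3 : t ≠ c) :
    rk a b c P Q t = 5 := by simp [rk, hP, hQ, h1, h2, h3]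

/-- If every arc of `E` either increases the rank `r` or ends at `m`, then any
reachability walk either is rank-monotone or passes through `m`. -/
lemma pass_lemma (E : Digr V) (r : V → ℕ) (m : V)
    (hr : ∀ s t, E.Adj s t → r s < r t ∨ t = m) :
    ∀ s t, E.Reach s t → r s ≤ r t ∨ (E.Reach s m ∧ E.Reach m t) := by
  intro s t hst
  have hst' : Relation.ReflTransGen E.Adj s t := hst
  clear hst
  induction hst' with
  | refl => exact Or.inl le_rfl
  | @tail b' c' hsb hbc ih =>
    rcases hr _ _ hbc with hlt | rfl
    · rcases ih with hle | ⟨h1, h2⟩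
      · exact Or.inl (le_trans hle (le_of_lt hlt))
      · exact Or.inr ⟨h1, Relation.ReflTransGen.tail h2 hbc⟩
    · exact Or.inr ⟨Relation.ReflTransGen.tail hsb hbc, Relation.ReflTransGen.refl⟩

/-- Any "cycle" (an arc `p→q` together with a walk back from `q` to `p`)
passes through `m`. -/
lemma through (E : Digr V) (r : V → ℕ) (m : V)
    (hr : ∀ s t, E.Adj s t → r s < r t ∨ t = m)
    (p q : V) (hpq : E.Adj p q) (hqp : E.Reach q p) :
    E.Reach q m ∧ E.Reach m p := by
  rcases pass_lemma E r m hr q p hqp with hle | h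
  · rcases hr p q hpq with hlt | rfl
    · omega
    · exact ⟨Relation.ReflTransGen.refl, hqp⟩
  · exact h

end Aux

/-- A member of the family H₃ is strongly connected of girth 4 and
not λ'-connected. -/
theorem stmt7 {V : Type} (D : Digr V) (u v w z x : V) (A B C : Set V)
    (hnd : [u, v, w, z, x].Nodup)
    (hdisj : ∀ t ∈ A ∪ B ∪ C, t ∉ ({u, v, w, z, x} : Set V))
    (hpw : List.Pairwise Disjoint [A, B, C])
    (hcov : ∀ t : V, t ∈ ({u, v, w, z, x} : Set V) ∪ A ∪ B ∪ C)
    (hAdj : ∀ p q : V, D.Adj p q ↔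
      (p = u ∧ q = v) ∨ (p = v ∧ q = w) ∨ (p = w ∧ q = z) ∨ (p = z ∧ q = u) ∨
      (p = w ∧ q = x) ∨ (p = x ∧ q = u) ∨
      (p = u ∧ q ∈ A) ∨ (p ∈ A ∧ q = v) ∨
      (p = v ∧ q ∈ B) ∨ (p ∈ B ∧ q = w) ∨
      (p = w ∧ q ∈ C) ∨ (p ∈ C ∧ q = u)) :
    D.StronglyConnected ∧ D.girth = 4 ∧ ¬ D.LambdaPrimeConnected := by
  classical
  -- distinctness of the five special vertices
  simp only [List.nodup_cons, List.mem_cons, List.not_mem_nil, or_false,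
    List.mem_singleton, not_or, List.nodup_nil, and_true] at hnd
  obtain ⟨⟨huv, huw, huz, hux⟩, ⟨hvw, hvz, hvx⟩, ⟨hwz, hwx⟩, hzx⟩ := hnd
  -- disjointness facts
  have hA5 : ∀ a ∈ A, a ≠ u ∧ a ≠ v ∧ a ≠ w ∧ a ≠ z ∧ a ≠ x := by
    intro a ha
    have := hdisj a (Or.inl (Or.inl ha))
    simpa [Set.mem_insert_iff, not_or] using this
  have hB5 : ∀ b ∈ B, b ≠ u ∧ b ≠ v ∧ b ≠ w ∧ b ≠ z ∧ b ≠ x := by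
    intro b hb
    have := hdisj b (Or.inl (Or.inr hb))
    simpa [Set.mem_insert_iff, not_or] using this
  have hC5 : ∀ c ∈ C, c ≠ u ∧ c ≠ v ∧ c ≠ w ∧ c ≠ z ∧ c ≠ x := by
    intro c hc
    have := hdisj c (Or.inr hc)
    simpa [Set.mem_insert_iff, not_or] using this
  obtain ⟨h1pw, h2pw⟩ := List.pairwise_cons.mp hpw
  have hAB : Disjoint A B := h1pw B (by simp)
  have hAC : Disjoint A C := h1pw C (by simp)
  have hBC : Disjoint B C := (List.pairwise_cons.mp h2pw).1 C (by simp)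
  have hBnA : ∀ b ∈ B, b ∉ A := fun b hb => Set.disjoint_right.mp hAB hb
  have hCnA : ∀ c ∈ C, c ∉ A := fun c hc => Set.disjoint_right.mp hAC hc
  have hCnB : ∀ c ∈ C, c ∉ B := fun c hc => Set.disjoint_right.mp hBC hc
  -- the arcs
  have auv : D.Adj u v := (hAdj u v).2 (Or.inl ⟨rfl, rfl⟩)
  have avw : D.Adj v w := (hAdj v w).2 (Or.inr (Or.inl ⟨rfl, rfl⟩))
  have awz : D.Adj w z := (hAdj w z).2 (Or.inr (Or.inr (Or.inl ⟨rfl, rfl⟩)))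
  have azu : D.Adj z u := (hAdj z u).2 (Or.inr (Or.inr (Or.inr (Or.inl ⟨rfl, rfl⟩))))
  have awx : D.Adj w x := (hAdj w x).2 (Or.inr (Or.inr (Or.inr (Or.inr (Or.inl ⟨rfl, rfl⟩)))))
  have axu : D.Adj x u := (hAdj x u).2 (Or.inr (Or.inr (Or.inr (Or.inr (Or.inr (Or.inl ⟨rfl, rfl⟩))))))
  have auA : ∀ a ∈ A, D.Adj u a := fun a ha => (hAdj u a).2 (Or.inr (Or.inr (Or.inr (Or.inr (Or.inr (Or.inr (Or.inl ⟨rfl, ha⟩)))))))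
  have aAv : ∀ a ∈ A, D.Adj a v := fun a ha => (hAdj a v).2 (Or.inr (Or.inr (Or.inr (Or.inr (Or.inr (Or.inr (Or.inr (Or.inl ⟨ha, rfl⟩))))))))
  have avB : ∀ b ∈ B, D.Adj v b := fun b hb => (hAdj v b).2 (Or.inr (Or.inr (Or.inr (Or.inr (Or.inr (Or.inr (Or.inr (Or.inr (Or.inl ⟨rfl, hb⟩)))))))))
  have aBw : ∀ b ∈ B, D.Adj b w := fun b hb => (hAdj b w).2 (Or.inr (Or.inr (Or.inr (Or.inr (Or.inr (Or.inr (Or.inr (Or.inr (Or.inr (Or.inl ⟨hb, rfl⟩))))))))))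
  have awC : ∀ c ∈ C, D.Adj w c := fun c hc => (hAdj w c).2 (Or.inr (Or.inr (Or.inr (Or.inr (Or.inr (Or.inr (Or.inr (Or.inr (Or.inr (Or.inr (Or.inl ⟨rfl, hc⟩)))))))))))
  have aCu : ∀ c ∈ C, D.Adj c u := fun c hc => (hAdj c u).2 (Or.inr (Or.inr (Or.inr (Or.inr (Or.inr (Or.inr (Or.inr (Or.inr (Or.inr (Or.inr (Or.inr ⟨hc, rfl⟩)))))))))))
  -- reachability to u and from u
  have Rzu : D.Reach z u := Relation.ReflTransGen.single azu
  have Rxu : D.Reach x u := Relation.ReflTransGen.single axu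
  have Rwu : D.Reach w u := (Relation.ReflTransGen.single awz).trans Rzu
  have Rvu : D.Reach v u := (Relation.ReflTransGen.single avw).trans Rwu
  have Rpu : ∀ p, D.Reach p u := by
    intro p
    rcases hcov p with ((h5 | ha) | hb) | hc
    · simp only [Set.mem_insert_iff, Set.mem_singleton_iff] at h5
      rcases h5 with rfl | rfl | rfl | rfl | rfl
      · exact Relation.ReflTransGen.refl
      · exact Rvu
      · exact Rwu
      · exact Rzu
      · exact Rxu
    · exact (Relation.ReflTransGen.single (aAv _ ha)).trans Rvu
    · exact (Relation.ReflTransGen.single (aBw _ hb)).trans Rwu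
    · exact Relation.ReflTransGen.single (aCu _ hc)
  have Ruv : D.Reach u v := Relation.ReflTransGen.single auv
  have Ruw : D.Reach u w := Ruv.trans (Relation.ReflTransGen.single avw)
  have Rup : ∀ q, D.Reach u q := by
    intro q
    rcases hcov q with ((h5 | ha) | hb) | hc
    · simp only [Set.mem_insert_iff, Set.mem_singleton_iff] at h5
      rcases h5 with rfl | rfl | rfl | rfl | rfl
      · exact Relation.ReflTransGen.refl
      · exact Ruv
      · exact Ruw
      · exact Ruw.trans (Relation.ReflTransGen.single awz)
      · exact Ruw.trans (Relation.ReflTransGen.single awx)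
    · exact Relation.ReflTransGen.single (auA _ ha)
    · exact Ruv.trans (Relation.ReflTransGen.single (avB _ hb))
    · exact Ruw.trans (Relation.ReflTransGen.single (awC _ hc))
  have hSC : D.StronglyConnected := fun p q => (Rpu p).trans (Rup q)
  -- rank functions
  set f : V → ℕ := rk u v w A B with hf
  set g : V → ℕ := rk v w u B ({z, x} ∪ C) with hg
  set h : V → ℕ := rk w u v ({z, x} ∪ C) A with hh
  -- values of f
  have hfu : f u = 0 := rk_a
  have hfv : f v = 2 := rk_b (Ne.symm huv)
  have hfw : f w = 4 := rk_c (Ne.symm huw) (Ne.symm hvw)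
  have hfz : f z = 5 := by
    refine rk_top ?_ ?_ (Ne.symm huz) (Ne.symm hvz) (Ne.symm hwz)
    · intro hz; exact (hA5 z hz).2.2.2.1 rfl
    · intro hz; exact (hB5 z hz).2.2.2.1 rfl
  have hfx : f x = 5 := by
    refine rk_top ?_ ?_ (Ne.symm hux) (Ne.symm hvx) (Ne.symm hwx)
    · intro hx; exact (hA5 x hx).2.2.2.2 rfl
    · intro hx; exact (hB5 x hx).2.2.2.2 rfl
  have hfA : ∀ a ∈ A, f a = 1 := fun a ha =>
    rk_P ha (hA5 a ha).1 (hA5 a ha).2.1 (hA5 a ha).2.2.1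
  have hfB : ∀ b ∈ B, f b = 3 := fun b hb =>
    rk_Q hb (hBnA b hb) (hB5 b hb).1 (hB5 b hb).2.1 (hB5 b hb).2.2.1
  have hfC : ∀ c ∈ C, f c = 5 := fun c hc =>
    rk_top (hCnA c hc) (hCnB c hc) (hC5 c hc).1 (hC5 c hc).2.1 (hC5 c hc).2.2.1
  -- values of g
  have hzxC : ∀ t, t = z ∨ t = x ∨ t ∈ C → t ∈ ({z, x} : Set V) ∪ C := by
    intro t ht
    rcases ht with rfl | rfl | ht
    · exact Or.inl (Or.inl rfl)
    · exact Or.inl (Or.inr rfl)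
    · exact Or.inr ht
  have hnzxC : ∀ t, t ≠ z → t ≠ x → t ∉ C → t ∉ ({z, x} : Set V) ∪ C := by
    intro t h1 h2 h3 ht
    rcases ht with (h | h) | h
    · exact h1 h
    · exact h2 h
    · exact h3 h
  have hgv : g v = 0 := rk_a
  have hgw : g w = 2 := rk_b (Ne.symm hvw)
  have hgu : g u = 4 := rk_c huv huw
  have hgz : g z = 3 := by
    refine rk_Q (hzxC z (Or.inl rfl)) ?_ (Ne.symm hvz) (Ne.symm hwz) (Ne.symm huz)
    intro hz; exact (hB5 z hz).2.2.2.1 rfl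
  have hgx : g x = 3 := by
    refine rk_Q (hzxC x (Or.inr (Or.inl rfl))) ?_ (Ne.symm hvx) (Ne.symm hwx) (Ne.symm hux)
    intro hx; exact (hB5 x hx).2.2.2.2 rfl
  have hgC : ∀ c ∈ C, g c = 3 := fun c hc =>
    rk_Q (hzxC c (Or.inr (Or.inr hc))) (hCnB c hc)
      (hC5 c hc).2.1 (hC5 c hc).2.2.1 (hC5 c hc).1
  have hgB : ∀ b ∈ B, g b = 1 := fun b hb =>
    rk_P hb (hB5 b hb).2.1 (hB5 b hb).2.2.1 (hB5 b hb).1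
  have hgA : ∀ a ∈ A, g a = 5 := fun a ha => by
    refine rk_top (Set.disjoint_left.mp hAB ha) ?_ (hA5 a ha).2.1 (hA5 a ha).2.2.1 (hA5 a ha).1
    · exact hnzxC a (hA5 a ha).2.2.2.1 (hA5 a ha).2.2.2.2 (fun hc => hCnA a hc ha)
  -- values of h
  have hhw : h w = 0 := rk_a
  have hhu : h u = 2 := rk_b huw
  have hhv : h v = 4 := rk_c hvw (Ne.symm huv)
  have hhz : h z = 1 :=
    rk_P (hzxC z (Or.inl rfl)) (Ne.symm hwz) (Ne.symm huz) (Ne.symm hvz)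
  have hhx : h x = 1 :=
    rk_P (hzxC x (Or.inr (Or.inl rfl))) (Ne.symm hwx) (Ne.symm hux) (Ne.symm hvx)
  have hhC : ∀ c ∈ C, h c = 1 := fun c hc =>
    rk_P (hzxC c (Or.inr (Or.inr hc))) (hC5 c hc).2.2.1 (hC5 c hc).1 (hC5 c hc).2.1
  have hhA : ∀ a ∈ A, h a = 3 := fun a ha =>
    rk_Q ha (hnzxC a (hA5 a ha).2.2.2.1 (hA5 a ha).2.2.2.2 (fun hc => hCnA a hc ha))
      (hA5 a ha).2.2.1 (hA5 a ha).1 (hA5 a ha).2.1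
  have hhB : ∀ b ∈ B, h b = 5 := fun b hb =>
    rk_top (hnzxC b (hB5 b hb).2.2.2.1 (hB5 b hb).2.2.2.2 (fun hc => hCnB b hc hb))
      (hBnA b hb) (hB5 b hb).2.2.1 (hB5 b hb).1 (hB5 b hb).2.1
  -- quantitative arc-rank lemma for f
  have hark : ∀ p q, D.Adj p q →
      f q = f p + 1 ∨ f q = f p + 2 ∨ (f p = 5 ∧ f q = 0) := by
    intro p q hpq
    rw [hAdj] at hpq
    rcases hpq with ⟨rfl, rfl⟩ | ⟨rfl, rfl⟩ | ⟨rfl, rfl⟩ | ⟨rfl, rfl⟩ | ⟨rfl, rfl⟩ |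
      ⟨rfl, rfl⟩ | ⟨rfl, hm⟩ | ⟨hm, rfl⟩ | ⟨rfl, hm⟩ | ⟨hm, rfl⟩ | ⟨rfl, hm⟩ | ⟨hm, rfl⟩
    · rw [hfu, hfv]; omega
    · rw [hfv, hfw]; omega
    · rw [hfw, hfz]; omega
    · rw [hfz, hfu]; omega
    · rw [hfw, hfx]; omega
    · rw [hfx, hfu]; omega
    · rw [hfu, hfA _ hm]; omega
    · rw [hfA _ hm, hfv]; omega
    · rw [hfv, hfB _ hm]; omega
    · rw [hfB _ hm, hfw]; omega
    · rw [hfw, hfC _ hm]; omega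
    · rw [hfC _ hm, hfu]; omega
  -- pass-through hypotheses
  have hrf : ∀ s t, D.Adj s t → f s < f t ∨ t = u := by
    intro s t hst
    rw [hAdj] at hst
    rcases hst with ⟨rfl, rfl⟩ | ⟨rfl, rfl⟩ | ⟨rfl, rfl⟩ | ⟨rfl, rfl⟩ | ⟨rfl, rfl⟩ |
      ⟨rfl, rfl⟩ | ⟨rfl, hm⟩ | ⟨hm, rfl⟩ | ⟨rfl, hm⟩ | ⟨hm, rfl⟩ | ⟨rfl, hm⟩ | ⟨hm, rfl⟩
    · left; rw [hfu, hfv]; omega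
    · left; rw [hfv, hfw]; omega
    · left; rw [hfw, hfz]; omega
    · exact Or.inr rfl
    · left; rw [hfw, hfx]; omega
    · exact Or.inr rfl
    · left; rw [hfu, hfA _ hm]; omega
    · left; rw [hfA _ hm, hfv]; omega
    · left; rw [hfv, hfB _ hm]; omega
    · left; rw [hfB _ hm, hfw]; omega
    · left; rw [hfw, hfC _ hm]; omega
    · exact Or.inr rfl
  have hrg : ∀ s t, D.Adj s t → g s < g t ∨ t = v := by
    intro s t hst
    rw [hAdj] at hst
    rcases hst with ⟨rfl, rfl⟩ | ⟨rfl, rfl⟩ | ⟨rfl, rfl⟩ | ⟨rfl, rfl⟩ | ⟨rfl, rfl⟩ |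
      ⟨rfl, rfl⟩ | ⟨rfl, hm⟩ | ⟨hm, rfl⟩ | ⟨rfl, hm⟩ | ⟨hm, rfl⟩ | ⟨rfl, hm⟩ | ⟨hm, rfl⟩
    · exact Or.inr rfl
    · left; rw [hgv, hgw]; omega
    · left; rw [hgw, hgz]; omega
    · left; rw [hgz, hgu]; omega
    · left; rw [hgw, hgx]; omega
    · left; rw [hgx, hgu]; omega
    · left; rw [hgu, hgA _ hm]; omega
    · exact Or.inr rfl
    · left; rw [hgv, hgB _ hm]; omega
    · left; rw [hgB _ hm, hgw]; omega
    · left; rw [hgw, hgC _ hm]; omega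
    · left; rw [hgC _ hm, hgu]; omega
  have hrh : ∀ s t, D.Adj s t → h s < h t ∨ t = w := by
    intro s t hst
    rw [hAdj] at hst
    rcases hst with ⟨rfl, rfl⟩ | ⟨rfl, rfl⟩ | ⟨rfl, rfl⟩ | ⟨rfl, rfl⟩ | ⟨rfl, rfl⟩ |
      ⟨rfl, rfl⟩ | ⟨rfl, hm⟩ | ⟨hm, rfl⟩ | ⟨rfl, hm⟩ | ⟨hm, rfl⟩ | ⟨rfl, hm⟩ | ⟨hm, rfl⟩
    · left; rw [hhu, hhv]; omega
    · exact Or.inr rfl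
    · left; rw [hhw, hhz]; omega
    · left; rw [hhz, hhu]; omega
    · left; rw [hhw, hhx]; omega
    · left; rw [hhx, hhu]; omega
    · left; rw [hhu, hhA _ hm]; omega
    · left; rw [hhA _ hm, hhv]; omega
    · left; rw [hhv, hhB _ hm]; omega
    · exact Or.inr rfl
    · left; rw [hhw, hhC _ hm]; omega
    · left; rw [hhC _ hm, hhu]; omega
  -- girth = 4
  have hcyc : D.IsCycleList [u, v, w, z] := by
    refine ⟨by simp, ?_, ?_, ?_⟩
    · simp only [List.nodup_cons, List.mem_cons, List.mem_singleton,
        List.not_mem_nil, List.nodup_nil, not_or]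
      tauto
    · simp only [List.Chain', List.isChain_cons_cons, List.isChain_singleton, and_true]
      exact ⟨auv, avw, awz⟩
    · simpa using azu
  have hmem4 : (4 : ℕ) ∈ {n : ℕ | ∃ l : List V, D.IsCycleList l ∧ l.length = n} :=
    ⟨[u, v, w, z], hcyc, rfl⟩
  have hgir : D.girth = 4 := by
    refine le_antisymm (Nat.sInf_le hmem4) (le_csInf ⟨4, hmem4⟩ ?_)
    rintro n ⟨l, ⟨hne, hnodup, hchain, hlast⟩, rfl⟩
    by_contra hlt
    push_neg at hlt
    rcases l with _ | ⟨p, _ | ⟨q, _ | ⟨r, _ | ⟨s4, rest⟩⟩⟩⟩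
    · exact hne rfl
    · have h1 := hark p p (by simpa using hlast)
      omega
    · simp only [List.Chain', List.isChain_cons_cons, List.isChain_singleton, and_true] at hchain
      have h1 := hark p q hchain
      have h2 := hark q p (by simpa using hlast)
      omega
    · simp only [List.Chain', List.isChain_cons_cons, List.isChain_singleton, and_true] at hchain
      have h1 := hark p q hchain.1
      have h2 := hark q r hchain.2
      have h3 := hark r p (by simpa using hlast)
      omega
    · simp only [List.length_cons] at hlt
      omega
  -- not λ'-connected
  refine ⟨hSC, hgir, ?_⟩
  rintro ⟨S, hS, X, ⟨x0, rfl⟩, ⟨p, hp, q, hq, hpq⟩, s, t, hst⟩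
  set E := D.delArcs S with hE
  have hEsub : ∀ s t, E.Adj s t → D.Adj s t := fun s t hst => hst.1
  have hrfE : ∀ s t, E.Adj s t → f s < f t ∨ t = u :=
    fun s t hst => hrf s t (hEsub s t hst)
  have hrgE : ∀ s t, E.Adj s t → g s < g t ∨ t = v :=
    fun s t hst => hrg s t (hEsub s t hst)
  have hrhE : ∀ s t, E.Adj s t → h s < h t ∨ t = w :=
    fun s t hst => hrh s t (hEsub s t hst)
  have hp' : E.MReach x0 p := hp
  have hq' : E.MReach x0 q := hq
  have hqp : E.Reach q p := hq'.2.trans hp'.1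
  have hu' := through E f u hrfE p q hpq hqp
  have hv' := through E g v hrgE p q hpq hqp
  have hw' := through E h w hrhE p q hpq hqp
  have hRpq : E.Reach p q := Relation.ReflTransGen.single hpq
  have hXu : u ∈ {y | E.MReach x0 y} :=
    ⟨(hp'.1.trans hRpq).trans hu'.1, hu'.2.trans hp'.2⟩
  have hXv : v ∈ {y | E.MReach x0 y} :=
    ⟨(hp'.1.trans hRpq).trans hv'.1, hv'.2.trans hp'.2⟩
  have hXw : w ∈ {y | E.MReach x0 y} :=
    ⟨(hp'.1.trans hRpq).trans hw'.1, hw'.2.trans hp'.2⟩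
  obtain ⟨hDst, hsX, htX⟩ := hst
  have hend : s = u ∨ s = v ∨ s = w ∨ t = u ∨ t = v ∨ t = w := by
    rcases (hAdj s t).1 hDst with ⟨h', _⟩ | ⟨h', _⟩ | ⟨h', _⟩ | ⟨_, h'⟩ | ⟨h', _⟩ |
      ⟨_, h'⟩ | ⟨h', _⟩ | ⟨_, h'⟩ | ⟨h', _⟩ | ⟨_, h'⟩ | ⟨h', _⟩ | ⟨_, h'⟩
    · exact Or.inl h'
    · exact Or.inr (Or.inl h')
    · exact Or.inr (Or.inr (Or.inl h'))
    · exact Or.inr (Or.inr (Or.inr (Or.inl h')))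
    · exact Or.inr (Or.inr (Or.inl h'))
    · exact Or.inr (Or.inr (Or.inr (Or.inl h')))
    · exact Or.inl h'
    · exact Or.inr (Or.inr (Or.inr (Or.inr (Or.inl h'))))
    · exact Or.inr (Or.inl h')
    · exact Or.inr (Or.inr (Or.inr (Or.inr (Or.inr h'))))
    · exact Or.inr (Or.inr (Or.inl h'))
    · exact Or.inr (Or.inr (Or.inr (Or.inl h')))
  rcases hend with rfl | rfl | rfl | rfl | rfl | rfl
  · exact hsX hXu
  · exact hsX hXv
  · exact hsX hXw
  · exact htX hXu
  · exact htX hXv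
  · exact htX hXw
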